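/- For all natural numbers m and n, the m-th power of F_n satisfies F_n^m = (b/a)^{⌊m/2⌋·ε(n)}·F_{mn}, where ε(n) = 1 if n is odd, 0 if n is even. -/

import Mathlib

theorem stmt_15 (a b : ℝ) (ha : a ≠ 0) (hb : b ≠ 0)
  (F : ℕ → Matrix (Fin 2) (Fin 2) ℝ) (hF0 : F 0 = 1) (hF1 : F 1 = !![b, b/a; 1, 0])
  (hF : ∀ n : ℕ, F (n + 2) = if Even (n + 2) then a • F (n + 1) + F n else b • F (n + 1) + F n) :
    ∀ m n : ℕ, (F n) ^ m = (b/a) ^ ((m / 2) * (if Odd n then 1 else 0)) • F (m * n) := by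
  have hFe : ∀ n, n % 2 = 0 → F (n+2) = a • F (n+1) + F n := by
    intro n hn
    rw [hF n, if_pos (Nat.even_iff.mpr (by omega))]
  have hFo : ∀ n, n % 2 = 1 → F (n+2) = b • F (n+1) + F n := by
    intro n hn
    rw [hF n, if_neg (by rw [Nat.even_iff]; omega)]
  -- Lemma A : F m * F 1 = (b/a)^ε(m) • F (m+1)
  have hA : ∀ m, F m * F 1 = (b/a) ^ (if Odd m then 1 else 0) • F (m+1) := by
    intro m
    induction m using Nat.twoStepInduction with
    | zero => simp [hF0]
    | one =>
      have h2 : F 2 = a • F 1 + F 0 := hFe 0 (by norm_num)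
      rw [h2, hF1, hF0]
      simp only [if_pos (by norm_num : Odd 1), pow_one]
      ext i j
      fin_cases i <;> fin_cases j <;>
        simp [Matrix.mul_apply, Fin.sum_univ_two, Matrix.one_apply] <;> field_simp <;> ring
    | more m ih1 ih2 =>
      rcases Nat.even_or_odd m with hm | hm
      · have hm2 : m % 2 = 0 := Nat.even_iff.mp hm
        rw [hFe m hm2, add_mul, Matrix.smul_mul, ih1, ih2,
          hFo (m+1) (by omega)]
        rw [if_neg (by rw [Nat.odd_iff]; omega : ¬ Odd m),
          if_pos (Nat.odd_iff.mpr (by omega) : Odd (m+1)),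
          if_neg (by rw [Nat.odd_iff]; omega : ¬ Odd (m+2))]
        match_scalars <;> field_simp
      · have hm2 : m % 2 = 1 := Nat.odd_iff.mp hm
        rw [hFo m hm2, add_mul, Matrix.smul_mul, ih1, ih2,
          hFe (m+1) (by omega)]
        rw [if_pos hm, if_neg (by rw [Nat.odd_iff]; omega : ¬ Odd (m+1)),
          if_pos (Nat.odd_iff.mpr (by omega) : Odd (m+2))]
        match_scalars <;> field_simp <;> ring
  -- Lemma B : F m * F n = (b/a)^(ε(m)ε(n)) • F (m+n)
  have hB : ∀ n m, F m * F n = (b/a) ^ ((if Odd m then 1 else 0) * (if Odd n then 1 else 0)) •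
      F (m + n) := by
    intro n
    induction n using Nat.twoStepInduction with
    | zero => intro m; simp [hF0]
    | one => intro m; simpa using hA m
    | more n ih1 ih2 =>
      intro m
      have key : ∀ c : ℝ, F (n+2) = c • F (n+1) + F n →
          F m * F (n+2) = c • ((b/a) ^ ((if Odd m then 1 else 0) * (if Odd (n+1) then 1 else 0)) •
            F (m + (n+1))) + (b/a) ^ ((if Odd m then 1 else 0) * (if Odd n then 1 else 0)) •
            F (m + n) := by
        intro c hc
        rw [hc, mul_add, Matrix.mul_smul, ih1, ih2]
      have hmn2 : m + (n + 2) = (m + n) + 2 := by omega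
      rcases Nat.even_or_odd n with hn | hn
      · have hn2 : n % 2 = 0 := Nat.even_iff.mp hn
        rw [key a (hFe n hn2), show m + (n+1) = m+n+1 from by omega]
        rcases Nat.even_or_odd m with hm | hm
        · have hm2 : m % 2 = 0 := Nat.even_iff.mp hm
          rw [hmn2, hFe (m+n) (by omega)]
          rw [if_neg (by rw [Nat.odd_iff]; omega : ¬ Odd m)]
          simp
        · have hm2 : m % 2 = 1 := Nat.odd_iff.mp hm
          rw [hmn2, hFo (m+n) (by omega)]
          rw [if_pos hm, if_pos (Nat.odd_iff.mpr (by omega) : Odd (n+1)),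
            if_neg (by rw [Nat.odd_iff]; omega : ¬ Odd n),
            if_neg (by rw [Nat.odd_iff]; omega : ¬ Odd (n+2))]
          match_scalars <;> field_simp <;> ring_nf <;> field_simp
      · have hn2 : n % 2 = 1 := Nat.odd_iff.mp hn
        rw [key b (hFo n hn2), show m + (n+1) = m+n+1 from by omega]
        rcases Nat.even_or_odd m with hm | hm
        · have hm2 : m % 2 = 0 := Nat.even_iff.mp hm
          rw [hmn2, hFo (m+n) (by omega)]
          rw [if_neg (by rw [Nat.odd_iff]; omega : ¬ Odd m)]
          simp
        · have hm2 : m % 2 = 1 := Nat.odd_iff.mp hm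
          rw [hmn2, hFe (m+n) (by omega)]
          rw [if_pos hm, if_pos hn, if_neg (by rw [Nat.odd_iff]; omega : ¬ Odd (n+1)),
            if_pos (Nat.odd_iff.mpr (by omega) : Odd (n+2))]
          match_scalars <;> field_simp <;> ring <;> field_simp
  -- Main statement
  intro m n
  induction m with
  | zero => simp [hF0]
  | succ m ih =>
    rw [pow_succ, ih, Matrix.smul_mul, hB n (m*n), smul_smul, ← pow_add]
    have hexp : m / 2 * (if Odd n then 1 else 0) +
        (if Odd (m*n) then 1 else 0) * (if Odd n then 1 else 0) =
        (m+1) / 2 * (if Odd n then 1 else 0) := by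
      by_cases hn : Odd n
      · simp only [if_pos hn, mul_one]
        by_cases hm : Odd m
        · rw [if_pos (hm.mul hn)]
          rw [Nat.odd_iff] at hm; omega
        · rw [if_neg (by simp [Nat.odd_mul]; tauto)]
          rw [Nat.odd_iff] at hm; omega
      · simp [hn]
    rw [hexp, add_one_mul]
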